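/- Let W be a finitely generated torsion-free abelian group, f a positive integer, and F an automorphism of W such that F^f = id and ∑_{n=0}^{f−1} F^n = 0 as an endomorphism of W. Then 1−F is injective on W, the subgroup (1−F)(W) has finite index in W, and det((1−F)_ℂ | W ⊗_ℤ ℂ) = [W : (1−F)(W)]; in particular this determinant is a positive integer. -/

import Mathlib

open TensorProduct

lemma sum_mulVec' {ι R : Type*} [Fintype ι] [DecidableEq ι] [CommRing R] {s : Finset ℕ}
    (A : ℕ → Matrix ι ι R) (v : ι → R) :
    (∑ n ∈ s, A n).mulVec v = ∑ n ∈ s, (A n).mulVec v := by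
  induction s using Finset.induction with
  | empty => simp [Matrix.zero_mulVec]
  | insert _ _ h ih => rw [Finset.sum_insert h, Finset.sum_insert h, Matrix.add_mulVec, ih]

lemma det_one_sub_pos {ι : Type} [Fintype ι] [DecidableEq ι] (B : Matrix ι ι ℤ)
    (f : ℕ) (hf : 0 < f) (hB : B ^ f = 1) (hN : (∑ n ∈ Finset.range f, B ^ n) = 0) :
    0 < ((1 : Matrix ι ι ℤ) - B).det := by
  set ρ : ℤ →+* ℝ := Int.castRingHom ℝ
  set BR : Matrix ι ι ℝ := ρ.mapMatrix B with hBr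
  have hBf : BR ^ f = 1 := by rw [hBr, ← map_pow, hB, map_one]
  have hNR : (∑ n ∈ Finset.range f, BR ^ n) = 0 := by
    rw [hBr]
    have : ∀ n : ℕ, (ρ.mapMatrix B) ^ n = ρ.mapMatrix (B ^ n) := fun n => (map_pow _ _ _).symm
    simp only [this, ← map_sum, hN, map_zero]
  set h : ℝ → ℝ := fun t => ((1 : Matrix ι ι ℝ) - t • BR).det with hh
  have hcont : Continuous h := by
    apply Continuous.matrix_det
    exact continuous_const.sub (continuous_id.smul continuous_const)
  have hne : ∀ t ∈ Set.Icc (0 : ℝ) 1, h t ≠ 0 := by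
    rintro t ⟨ht0, ht1⟩ h0
    obtain ⟨v, hv, hmul⟩ := Matrix.exists_mulVec_eq_zero_iff.mpr h0
    have hv' : v = t • BR.mulVec v := by
      have := hmul
      rw [Matrix.sub_mulVec, Matrix.one_mulVec, Matrix.smul_mulVec, sub_eq_zero] at this
      exact this
    have hiter : ∀ k : ℕ, v = t ^ k • (BR ^ k).mulVec v := by
      intro k
      induction k with
      | zero => simp [Matrix.one_mulVec]
      | succ k ih =>
        calc v = t • BR.mulVec v := hv'
        _ = t • BR.mulVec (t ^ k • (BR ^ k).mulVec v) := by rw [← ih]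
        _ = t ^ (k + 1) • (BR ^ (k + 1)).mulVec v := by
            rw [Matrix.mulVec_smul, Matrix.mulVec_mulVec, smul_smul, ← pow_succ', ← pow_succ']
    have hvf : v = t ^ f • v := by
      have := hiter f
      rwa [hBf, Matrix.one_mulVec] at this
    have htf : t ^ f = 1 := by
      by_contra hne1
      have : (1 - t ^ f) • v = 0 := by rw [sub_smul, one_smul, ← hvf, sub_self]
      rcases smul_eq_zero.mp this with h | h
      · exact hne1 (by linarith [sub_eq_zero.mp h])
      · exact hv h
    have ht1' : t = 1 := by
      rcases lt_or_eq_of_le ht1 with hlt | heq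
      · exfalso
        have : t ^ f < 1 := pow_lt_one₀ ht0 hlt hf.ne'
        rw [htf] at this; exact lt_irrefl _ this
      · exact heq
    subst ht1'
    have hfix : ∀ k : ℕ, (BR ^ k).mulVec v = v := by
      intro k; have := hiter k; simp at this; exact this.symm
    have : (0 : Matrix ι ι ℝ).mulVec v = (f : ℝ) • v := by
      rw [← hNR, sum_mulVec']
      simp only [hfix]
      rw [Finset.sum_const, Finset.card_range, ← Nat.cast_smul_eq_nsmul ℝ]
    rw [Matrix.zero_mulVec] at this
    have hfv : v = 0 := by
      have hf0 : (f : ℝ) ≠ 0 := Nat.cast_ne_zero.mpr hf.ne'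
      rcases smul_eq_zero.mp this.symm with h | h
      · exact absurd h hf0
      · exact h
    exact hv hfv
  have h0 : h 0 = 1 := by simp [hh]
  have hpos : 0 < h 1 := by
    by_contra hle
    push_neg at hle
    have : (0 : ℝ) ∈ Set.Icc (h 1) (h 0) := ⟨hle, by rw [h0]; exact zero_le_one⟩
    obtain ⟨t, ht, hht⟩ := intermediate_value_Icc' zero_le_one hcont.continuousOn this
    exact hne t ht hht
  have : h 1 = (((1 - B).det : ℤ) : ℝ) := by
    rw [hh]
    show ((1 : Matrix ι ι ℝ) - (1 : ℝ) • BR).det = _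
    rw [one_smul]
    have heq : (1 : Matrix ι ι ℝ) - BR = ρ.mapMatrix (1 - B) := by rw [map_sub, map_one]
    rw [heq, ← RingHom.map_det]
    simp [ρ]
  rw [this] at hpos
  exact_mod_cast hpos
lemma card_quot_eq_natAbs_det (W : Type) [AddCommGroup W] [Module.Finite ℤ W]
    [Module.Free ℤ W] (φ : W →ₗ[ℤ] W) (hφ : Function.Injective φ) :
    Nat.card (W ⧸ LinearMap.range φ) = (LinearMap.det φ).natAbs := by
  classical
  set b := Module.Free.chooseBasis ℤ W with hb
  set ι := Module.Free.ChooseBasisIndex ℤ W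
  set N := LinearMap.range φ with hNdef
  obtain ⟨n, snf⟩ := N.smithNormalForm b
  have hn : n = Fintype.card ι := by
    have h1 : Module.finrank ℤ N = n := by
      rw [Module.finrank_eq_card_basis snf.bN, Fintype.card_fin]
    have h2 : Module.finrank ℤ W = Fintype.card ι := Module.finrank_eq_card_basis b
    rw [← h1, ← h2, (LinearEquiv.ofInjective φ hφ).finrank_eq]
  have hidx : Nat.card (W ⧸ N) = ∏ i, (snf.a i).natAbs := by
    show N.toAddSubgroup.index = _
    rw [snf.toAddSubgroup_index_eq_ite, if_pos hn]
    simp [Ideal.span_singleton_toAddSubgroup_eq_zmultiples, Int.index_zmultiples]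
  let eι : Fin n ≃ ι := Fintype.equivOfCardEq (by simp [hn])
  let e' : W ≃ₗ[ℤ] N := snf.bM.equiv (snf.bN.reindex eι) (Equiv.refl ι)
  let g : W →ₗ[ℤ] W := N.subtype ∘ₗ (e' : W →ₗ[ℤ] N)
  have fbij : Function.Bijective snf.f :=
    (Fintype.bijective_iff_injective_and_card _).mpr ⟨snf.f.injective, by simp [hn]⟩
  let τ : Equiv.Perm ι := eι.symm.trans (Equiv.ofBijective snf.f fbij)
  let d : ι → ℤ := fun j => snf.a (eι.symm (τ.symm j))
  have hτ : ∀ j, τ j = snf.f (eι.symm j) := fun j => rfl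
  have hM : LinearMap.toMatrix snf.bM snf.bM g = (Matrix.diagonal d).submatrix id ⇑τ := by
    ext i j
    rw [LinearMap.toMatrix_apply]
    have hg : g (snf.bM j) = (snf.a (eι.symm j)) • snf.bM (snf.f (eι.symm j)) := by
      show ((e' (snf.bM j) : N) : W) = _
      rw [Module.Basis.equiv_apply snf.bM]
      simp [snf.snf]
    rw [hg]
    simp only [map_smul, Module.Basis.repr_self, Matrix.submatrix_apply, Matrix.diagonal_apply, id_eq,
      Finsupp.smul_apply, Finsupp.single_apply, smul_eq_mul, mul_ite, mul_one, mul_zero]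
    by_cases hij : i = τ j
    · rw [if_pos (by rw [← hτ]; exact hij.symm), if_pos hij]
      show snf.a (eι.symm j) = d i
      rw [hij]
      show _ = snf.a (eι.symm (τ.symm (τ j)))
      rw [Equiv.symm_apply_apply]
    · rw [if_neg (by rw [← hτ]; exact fun h => hij h.symm), if_neg hij]
  have hdetg : (LinearMap.det g).natAbs = ∏ i, (snf.a i).natAbs := by
    rw [← LinearMap.det_toMatrix snf.bM, hM, Matrix.det_permute' τ, Matrix.det_diagonal,
      Int.natAbs_mul]
    rw [Int.cast_id]
    have h1 : ((((Equiv.Perm.sign τ) : ℤˣ) : ℤ)).natAbs = 1 := Int.units_natAbs _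
    rw [h1, one_mul]
    have h2 : (∏ i : ι, d i).natAbs = ∏ i : ι, (d i).natAbs := map_prod Int.natAbsHom d Finset.univ
    rw [h2]
    show ∏ i, (snf.a ((τ.symm.trans eι.symm) i)).natAbs = _
    exact Equiv.prod_comp (τ.symm.trans eι.symm) (fun k => (snf.a k).natAbs)
  -- relate det φ to det g
  have hrange : LinearMap.range g = N := by
    have : LinearMap.range (e' : W →ₗ[ℤ] N) = ⊤ := LinearEquiv.range e'
    rw [hNdef]
    show LinearMap.range (N.subtype ∘ₗ (e' : W →ₗ[ℤ] N)) = _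
    rw [LinearMap.range_comp, this, Submodule.map_top, Submodule.range_subtype]
  have hcomp : φ = g ∘ₗ (((LinearEquiv.ofInjective φ hφ).trans e'.symm) : W →ₗ[ℤ] W) := by
    ext x
    show φ x = (N.subtype ∘ₗ (e' : W →ₗ[ℤ] N)) (e'.symm ((LinearEquiv.ofInjective φ hφ) x))
    simp only [LinearMap.coe_comp, Function.comp_apply, Submodule.coe_subtype,
      LinearEquiv.coe_coe, LinearEquiv.apply_symm_apply]
    rfl
  have hdet : (LinearMap.det φ).natAbs = (LinearMap.det g).natAbs := by
    rw [hcomp, LinearMap.det_comp, Int.natAbs_mul]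
    have := Int.natAbs_of_isUnit (LinearEquiv.isUnit_det' ((LinearEquiv.ofInjective φ hφ).trans e'.symm))
    rw [this, mul_one]
  rw [hidx, hdet, hdetg]


/-- **Determinant of `1 - F` equals the index of its image.**
`W` is a finitely generated torsion-free abelian group, `F` an automorphism of `W` with
`F ^ f = 1` (`f > 0`) and `∑_{n=0}^{f-1} Fⁿ = 0` as an endomorphism of `W`.  Then `1 - F` is
injective, its image `(1-F)(W)` has finite index in `W`, and the determinant of the induced
endomorphism `(1-F)_ℂ` of `W ⊗ ℂ` equals the index `[W : (1-F)W]`; in particular this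
determinant is a positive integer. -/
theorem stmt_3 (W : Type) [AddCommGroup W] [Module.Finite ℤ W] [NoZeroSMulDivisors ℤ W]
    (f : ℕ) (hf : 0 < f) (F : W ≃ₗ[ℤ] W) (hF : F ^ f = 1)
    (hN : (∑ n ∈ Finset.range f, (F : W →ₗ[ℤ] W) ^ n) = 0) :
    Function.Injective ⇑((LinearMap.id : W →ₗ[ℤ] W) - (F : W →ₗ[ℤ] W)) ∧
    Finite (W ⧸ LinearMap.range (LinearMap.id - (F : W →ₗ[ℤ] W))) ∧
    0 < Nat.card (W ⧸ LinearMap.range (LinearMap.id - (F : W →ₗ[ℤ] W))) ∧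
    LinearMap.det (LinearMap.baseChange ℂ (LinearMap.id - (F : W →ₗ[ℤ] W))) =
      (Nat.card (W ⧸ LinearMap.range (LinearMap.id - (F : W →ₗ[ℤ] W))) : ℂ) := by
  classical
  haveI : Module.Free ℤ W := Module.free_of_finite_type_torsion_free'
  set φ : W →ₗ[ℤ] W := LinearMap.id - (F : W →ₗ[ℤ] W) with hφdef
  have hFpow : (F : W →ₗ[ℤ] W) ^ f = 1 := by
    ext x
    have h1 : ((F : W →ₗ[ℤ] W) ^ f) x = (⇑F)^[f] x := Module.End.pow_apply _ _ _
    have h2 : (F ^ f) x = (⇑F)^[f] x := LinearEquiv.pow_apply _ _ _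
    rw [Module.End.one_apply, h1, ← h2, hF]
    rfl
  -- injectivity
  have hinj : Function.Injective φ := by
    rw [← LinearMap.ker_eq_bot, Submodule.eq_bot_iff]
    intro x hx
    rw [LinearMap.mem_ker] at hx
    have hfix : F x = x := by
      have : x - F x = 0 := hx
      rw [sub_eq_zero] at this
      exact this.symm
    have hpow : ∀ n : ℕ, ((F : W →ₗ[ℤ] W) ^ n) x = x := by
      intro n
      induction n with
      | zero => rfl
      | succ n ih => rw [pow_succ', Module.End.mul_apply, ih]; exact hfix
    have hsum : (∑ n ∈ Finset.range f, (F : W →ₗ[ℤ] W) ^ n) x = 0 := by rw [hN]; rfl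
    rw [LinearMap.sum_apply] at hsum
    simp only [hpow] at hsum
    rw [Finset.sum_const, Finset.card_range, ← Nat.cast_smul_eq_nsmul ℤ] at hsum
    rcases smul_eq_zero.mp hsum with h | h
    · exact absurd h (by exact_mod_cast hf.ne')
    · exact h
  -- determinant positivity
  set b := Module.Free.chooseBasis ℤ W with hb
  set ψ := LinearMap.toMatrixAlgEquiv b with hψ
  set B := ψ (F : W →ₗ[ℤ] W) with hB
  have hB1 : B ^ f = 1 := by rw [hB, ← map_pow, hFpow, map_one]
  have hBN : (∑ n ∈ Finset.range f, B ^ n) = 0 := by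
    rw [hB]
    have : ∀ n : ℕ, (ψ (F : W →ₗ[ℤ] W)) ^ n = ψ ((F : W →ₗ[ℤ] W) ^ n) := fun n => (map_pow _ _ _).symm
    simp only [this, ← map_sum, hN, map_zero]
  have hdetpos : 0 < LinearMap.det φ := by
    have hψφ : ψ φ = 1 - B := by rw [hφdef, map_sub, hB]; congr 1; rw [← Module.End.one_eq_id, map_one]
    have hdet : LinearMap.det φ = ((1 : Matrix _ _ ℤ) - B).det := by
      rw [← hψφ]
      exact (LinearMap.det_toMatrix b φ).symm
    rw [hdet]
    exact det_one_sub_pos B f hf hB1 hBN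
  have hcard := card_quot_eq_natAbs_det W φ hinj
  refine ⟨hinj, ?_, ?_, ?_⟩
  · exact Nat.finite_of_card_ne_zero (by rw [hcard]; exact Int.natAbs_ne_zero.mpr hdetpos.ne')
  · rw [hcard]; exact Int.natAbs_pos.mpr hdetpos.ne'
  · rw [hcard, LinearMap.det_baseChange]
    have h2 : (LinearMap.det φ) = ((LinearMap.det φ).natAbs : ℤ) :=
      (Int.natAbs_of_nonneg hdetpos.le).symm
    rw [algebraMap_int_eq, eq_intCast]
    nth_rewrite 1 [h2]
    rw [Int.cast_natCast]
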